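/- arXiv:1603.05810 — 2 statements merged into one kernel-verified Lean document; each statement's English description precedes it below -/
import Mathlib

section
/- π² = 72·Re Li₂((1/2)·e^{iπ/3}) − 18·Li₂(1/4), where Li₂(z) = ∑_{k≥1} z^k/k² for complex z with |z| ≤ 1. -/
open Real Set Filter Topology

noncomputable def Li (s : ℕ) (z : ℂ) : ℂ := ∑' k : ℕ, z ^ (k + 1) / ((k : ℂ) + 1) ^ s

noncomputable def LiR (s : ℕ) (x : ℝ) : ℝ := ∑' k : ℕ, x ^ (k + 1) / ((k : ℝ) + 1) ^ s

lemma summable_aux : Summable (fun k : ℕ => 1 / ((k : ℝ) + 1) ^ 2) := by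
  have h : Summable (fun n : ℕ => 1 / (n : ℝ) ^ 2) :=
    Real.summable_one_div_nat_pow.mpr (by norm_num)
  have := (summable_nat_add_iff 1).2 h
  refine this.congr fun n => by push_cast; ring

lemma summable_LiR {x : ℝ} (hx : |x| ≤ 1) :
    Summable (fun k : ℕ => x ^ (k + 1) / ((k : ℝ) + 1) ^ 2) := by
  refine Summable.of_norm_bounded summable_aux fun k => ?_
  have hk : (0:ℝ) < ((k:ℝ)+1)^2 := by positivity
  rw [norm_div, norm_pow, Real.norm_eq_abs, Real.norm_eq_abs, abs_of_pos hk]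
  rw [div_le_div_iff₀ hk hk]
  have : |x| ^ (k+1) ≤ 1 := pow_le_one₀ (abs_nonneg x) hx
  nlinarith [pow_nonneg (abs_nonneg x) (k+1)]

lemma LiR_contOn : ContinuousOn (LiR 2) (Icc (-1:ℝ) 1) := by
  have : ContinuousOn (fun x : ℝ => ∑' k : ℕ, x ^ (k + 1) / ((k : ℝ) + 1) ^ 2) (Icc (-1:ℝ) 1) := by
    refine continuousOn_tsum (fun k => (continuous_pow (k+1)).continuousOn.div_const _)
      summable_aux fun k x hx => ?_
    have hx1 : |x| ≤ 1 := abs_le.mpr ⟨hx.1, hx.2⟩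
    have hk : (0:ℝ) < ((k:ℝ)+1)^2 := by positivity
    rw [norm_div, norm_pow, Real.norm_eq_abs, Real.norm_eq_abs,
      abs_of_pos hk, div_le_div_iff₀ hk hk]
    have : |x| ^ (k+1) ≤ 1 := pow_le_one₀ (abs_nonneg x) hx1
    nlinarith [pow_nonneg (abs_nonneg x) (k+1)]
  exact this

lemma LiR_zero : LiR 2 0 = 0 := by
  rw [LiR]
  convert tsum_zero with k
  simp

lemma LiR_one : LiR 2 1 = π ^ 2 / 6 := by
  have h : HasSum (fun n : ℕ => (1:ℝ) / (n : ℝ) ^ 2) (π ^ 2 / 6) := hasSum_zeta_two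
  have h2 : HasSum (fun n : ℕ => (1:ℝ) / ((n + 1 : ℕ) : ℝ) ^ 2) (π ^ 2 / 6) := by
    rw [hasSum_nat_add_iff (f := fun n : ℕ => (1:ℝ)/(n:ℝ)^2) 1]
    simpa using h
  have h3 : HasSum (fun k : ℕ => (1:ℝ) ^ (k + 1) / ((k : ℝ) + 1) ^ 2) (π ^ 2 / 6) := by
    convert h2 using 1
    funext k; push_cast; ring
  rw [LiR]
  exact h3.tsum_eq

lemma LiR_hasDerivAt {x : ℝ} (hx : x ∈ Ioo (-1:ℝ) 1) :
    HasDerivAt (LiR 2) (∑' k : ℕ, x ^ k / ((k : ℝ) + 1)) x := by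
  obtain ⟨hx1, hx2⟩ := hx
  set r : ℝ := (1 + |x|) / 2 with hr
  have hxr : |x| < r := by
    have h1 : |x| < 1 := abs_lt.mpr ⟨hx1, hx2⟩
    rw [hr]; linarith
  have hr0 : 0 ≤ r := le_trans (abs_nonneg x) hxr.le
  have hr1 : r < 1 := by
    have : |x| < 1 := abs_lt.mpr ⟨hx1, hx2⟩
    rw [hr]; linarith
  have key : HasDerivAt (fun y : ℝ => ∑' k : ℕ, y ^ (k + 1) / ((k : ℝ) + 1) ^ 2)
      (∑' k : ℕ, x ^ k / ((k : ℝ) + 1)) x := by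
    refine hasDerivAt_tsum_of_isPreconnected (u := fun k : ℕ => r ^ k) (y₀ := 0)
      (g := fun (k : ℕ) (y : ℝ) => y ^ (k + 1) / ((k : ℝ) + 1) ^ 2)
      (g' := fun (k : ℕ) (y : ℝ) => y ^ k / ((k : ℝ) + 1))
      (summable_geometric_of_lt_one hr0 hr1) (isOpen_Ioo (a := -r) (b := r))
      (convex_Ioo _ _).isPreconnected (fun k y _ => ?_) (fun k y hy => ?_) ?_ ?_ ?_
    · have h1 : HasDerivAt (fun y : ℝ => y ^ (k + 1)) (((k:ℝ)+1) * y ^ k) y := by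
        simpa using hasDerivAt_pow (k+1) y
      have h2 := h1.div_const (((k:ℝ)+1)^2)
      refine h2.congr_deriv ?_
      have hne : ((k:ℝ)+1) ≠ 0 := by positivity
      field_simp
    · rw [Real.norm_eq_abs, abs_div, abs_pow]
      have hy1 : |y| ≤ r := by rw [abs_le]; exact ⟨hy.1.le, hy.2.le⟩
      have h1 : |y| ^ k ≤ r ^ k := pow_le_pow_left₀ (abs_nonneg y) hy1 k
      have h2 : (1:ℝ) ≤ |(k:ℝ)+1| := by
        rw [abs_of_pos (by positivity : (0:ℝ) < (k:ℝ)+1)]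
        linarith [Nat.cast_nonneg (α := ℝ) k]
      calc |y| ^ k / |(k:ℝ)+1| ≤ |y| ^ k / 1 :=
            div_le_div_of_nonneg_left ?_ ?_ ?_ |>.trans_eq rfl
        _ = |y| ^ k := div_one _
        _ ≤ r ^ k := h1
      · positivity
      · norm_num
      · exact h2
    · exact ⟨by linarith [lt_of_le_of_lt (abs_nonneg x) hxr], lt_of_le_of_lt (abs_nonneg x) hxr⟩
    · refine summable_zero.congr fun k => ?_
      simp
    · exact abs_lt.mp hxr
  exact key

lemma LiR_deriv_ne {x : ℝ} (hx : x ∈ Ioo (-1:ℝ) 1) (hx0 : x ≠ 0) :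
    HasDerivAt (LiR 2) (-Real.log (1 - x) / x) x := by
  have h := LiR_hasDerivAt hx
  have habs : |x| < 1 := abs_lt.mpr ⟨hx.1, hx.2⟩
  have hlog : HasSum (fun n : ℕ => x ^ (n + 1) / ((n : ℝ) + 1)) (-Real.log (1 - x)) := by
    have := Real.hasSum_pow_div_log_of_abs_lt_one habs
    refine this.congr fun n => by push_cast; ring_nf
  have h2 : HasSum (fun n : ℕ => x * (x ^ n / ((n : ℝ) + 1))) (-Real.log (1 - x)) := by
    have e : (fun n : ℕ => x ^ (n + 1) / ((n : ℝ) + 1)) = fun n : ℕ => x * (x ^ n / ((n : ℝ) + 1)) := by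
      funext n; rw [pow_succ]; ring
    exact e ▸ hlog
  have h3 : HasSum (fun n : ℕ => x ^ n / ((n : ℝ) + 1)) (-Real.log (1 - x) / x) := by
    have h4 := h2.mul_left x⁻¹
    have h5 : (fun n : ℕ => x⁻¹ * (x * (x ^ n / ((n : ℝ) + 1)))) = fun n : ℕ => x ^ n / ((n : ℝ) + 1) := by
      funext n; field_simp
    rw [h5] at h4
    rw [div_eq_inv_mul]
    exact h4
  rwa [← h3.tsum_eq]

lemma LiR_deriv_zero : HasDerivAt (LiR 2) 1 0 := by
  have h := LiR_hasDerivAt (x := 0) (by constructor <;> norm_num)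
  have : (∑' k : ℕ, (0:ℝ) ^ k / ((k : ℝ) + 1)) = 1 := by
    rw [tsum_eq_single 0]
    · norm_num
    · intro b hb
      rw [zero_pow hb]
      simp
  rwa [this] at h

lemma refl_id {x : ℝ} (hx : x ∈ Ioo (0:ℝ) 1) :
    LiR 2 x + LiR 2 (1 - x) + Real.log x * Real.log (1 - x) = π ^ 2 / 6 := by
  set h : ℝ → ℝ := fun y => LiR 2 y + LiR 2 (1 - y) + Real.log y * Real.log (1 - y) with hdef
  have hderiv : ∀ y : ℝ, 0 < y → y < 1 → HasDerivAt h 0 y := by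
    intro y hy0 hy1
    have hyne : y ≠ 0 := ne_of_gt hy0
    have h1yne : (1:ℝ) - y ≠ 0 := by intro hc; linarith [sub_eq_zero.mp hc]
    have d1 : HasDerivAt (LiR 2) (-Real.log (1 - y) / y) y :=
      LiR_deriv_ne ⟨by linarith, hy1⟩ hyne
    have inner : HasDerivAt (fun z : ℝ => 1 - z) (-1) y := by
      simpa using (hasDerivAt_id y).const_sub 1
    have d2' : HasDerivAt (LiR 2) (-Real.log (1 - (1 - y)) / (1 - y)) (1 - y) :=
      LiR_deriv_ne ⟨by linarith, by linarith⟩ h1yne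
    have d2 : HasDerivAt (fun z : ℝ => LiR 2 (1 - z))
        ((-Real.log (1 - (1 - y)) / (1 - y)) * (-1)) y := d2'.comp y inner
    have dlog1 : HasDerivAt Real.log y⁻¹ y := Real.hasDerivAt_log hyne
    have dlog2 : HasDerivAt (fun z : ℝ => Real.log (1 - z)) ((1 - y)⁻¹ * (-1)) y :=
      (Real.hasDerivAt_log h1yne).comp y inner
    have d3 : HasDerivAt (fun z : ℝ => Real.log z * Real.log (1 - z))
        (y⁻¹ * Real.log (1 - y) + Real.log y * ((1 - y)⁻¹ * (-1))) y := dlog1.mul dlog2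
    have total := (d1.add d2).add d3
    have hsimp : (1:ℝ) - (1 - y) = y := by ring
    rw [hsimp] at total
    refine total.congr_deriv ?_
    field_simp
    ring
  have hconst : ∀ a b : ℝ, 0 < a → a ≤ b → b < 1 → h b = h a := by
    intro a b ha hab hb1
    have hcont : ContinuousOn h (Icc a b) := by
      have c1 : ContinuousOn (LiR 2) (Icc a b) :=
        LiR_contOn.mono (fun y hy => ⟨by linarith [hy.1], by linarith [hy.2]⟩)
      have c2 : ContinuousOn (fun y : ℝ => LiR 2 (1 - y)) (Icc a b) := by
        refine LiR_contOn.comp (continuousOn_const.sub continuousOn_id) ?_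
        intro y hy
        simp only [Set.mem_Icc]
        constructor <;> linarith [hy.1, hy.2]
      have c3 : ContinuousOn (fun y : ℝ => Real.log y * Real.log (1 - y)) (Icc a b) := by
        refine ContinuousOn.mul ?_ ?_
        · refine ContinuousOn.comp Real.continuousOn_log continuousOn_id ?_
          intro y hy
          simp only [Set.mem_compl_iff, Set.mem_singleton_iff, id_eq]
          exact ne_of_gt (lt_of_lt_of_le ha hy.1)
        · refine Real.continuousOn_log.comp (continuousOn_const.sub continuousOn_id) ?_
          intro y hy
          simp only [Set.mem_compl_iff, Set.mem_singleton_iff]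
          intro hc
          have : y = 1 := by linarith [sub_eq_zero.mp hc]
          linarith [hy.2]
      exact (c1.add c2).add c3
    have := constant_of_has_deriv_right_zero hcont (fun y hy => by
      exact (hderiv y (lt_of_lt_of_le ha hy.1) (lt_trans hy.2 hb1)).hasDerivWithinAt)
    exact this b ⟨hab, le_refl b⟩
  have hlim : Tendsto h (𝓝[>] (0:ℝ)) (𝓝 (π ^ 2 / 6)) := by
    have l1 : Tendsto (fun y : ℝ => LiR 2 y) (𝓝[>] (0:ℝ)) (𝓝 0) := by
      have c0 : ContinuousAt (LiR 2) 0 :=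
        LiR_contOn.continuousAt (Icc_mem_nhds (by norm_num) (by norm_num))
      have := c0.tendsto
      rw [LiR_zero] at this
      exact this.mono_left nhdsWithin_le_nhds
    have l2 : Tendsto (fun y : ℝ => LiR 2 (1 - y)) (𝓝[>] (0:ℝ)) (𝓝 (π ^ 2 / 6)) := by
      have c1 : ContinuousWithinAt (LiR 2) (Icc (-1:ℝ) 1) 1 :=
        LiR_contOn.continuousWithinAt (by norm_num)
      have t1 : Tendsto (fun y : ℝ => 1 - y) (𝓝[>] (0:ℝ)) (𝓝[Icc (-1:ℝ) 1] 1) := by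
        apply tendsto_nhdsWithin_of_tendsto_nhds_of_eventually_within
        · have t0 : Tendsto (fun y : ℝ => 1 - y) (𝓝 (0:ℝ)) (𝓝 1) := by
            exact (continuous_sub_left (1:ℝ)).tendsto' 0 1 (by simp)
          exact t0.mono_left nhdsWithin_le_nhds
        · filter_upwards [Ioo_mem_nhdsGT_of_mem (by norm_num : (0:ℝ) ∈ Ico (0:ℝ) 1)] with y hy
          exact ⟨by linarith [hy.2], by linarith [hy.1]⟩
      have := c1.tendsto.comp t1
      rwa [LiR_one] at this
    have l3 : Tendsto (fun y : ℝ => Real.log y * Real.log (1 - y)) (𝓝[>] (0:ℝ)) (𝓝 0) := by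
      have hg : Tendsto (fun y : ℝ => |Real.log y * y| * 2) (𝓝[>] (0:ℝ)) (𝓝 0) := by
        have := tendsto_log_mul_rpow_nhdsGT_zero (r := 1) one_pos
        have h1 : Tendsto (fun y : ℝ => Real.log y * y) (𝓝[>] (0:ℝ)) (𝓝 0) := by
          refine this.congr' ?_
          filter_upwards [self_mem_nhdsWithin] with y hy
          rw [Real.rpow_one]
        have := h1.abs.mul_const 2
        simpa using this
      refine squeeze_zero_norm' ?_ hg
      filter_upwards [Ioo_mem_nhdsGT_of_mem (by norm_num : (0:ℝ) ∈ Ico (0:ℝ) (1/2))] with y hy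
      obtain ⟨hy0, hy12⟩ := hy
      have hu0 : (0:ℝ) < 1 - y := by linarith
      have hlog1 : Real.log (1 - y) ≤ 0 := Real.log_nonpos (by linarith) (by linarith)
      have hbound : -Real.log (1 - y) ≤ 2 * y := by
        have e1 : -Real.log (1 - y) = Real.log (1 - y)⁻¹ := (Real.log_inv _).symm
        have e2 : Real.log (1 - y)⁻¹ ≤ (1 - y)⁻¹ - 1 :=
          Real.log_le_sub_one_of_pos (by positivity)
        have e3 : (1 - y)⁻¹ - 1 = y / (1 - y) := by field_simp; ring
        have e4 : y / (1 - y) ≤ 2 * y := by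
          rw [div_le_iff₀ hu0]
          nlinarith
        linarith [e1 ▸ e2, e3 ▸ e2]
      have hlogy : Real.log y ≤ 0 := Real.log_nonpos (le_of_lt hy0) (by linarith)
      have h5 : |Real.log (1 - y)| ≤ 2 * y := by
        rw [abs_of_nonpos hlog1]; exact hbound
      have h6 : |y| = y := abs_of_pos hy0
      rw [Real.norm_eq_abs, abs_mul]
      calc |Real.log y| * |Real.log (1 - y)| ≤ |Real.log y| * (2 * y) :=
            mul_le_mul_of_nonneg_left h5 (abs_nonneg _)
        _ = |Real.log y * y| * 2 := by rw [abs_mul, h6]; ring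
    have := (l1.add l2).add l3
    simpa using this
  have hev : ∀ᶠ y in 𝓝[>] (0:ℝ), h y = h x := by
    filter_upwards [Ioc_mem_nhdsGT_of_mem (⟨le_refl 0, hx.1⟩ : (0:ℝ) ∈ Ico (0:ℝ) x)] with y hy
    exact (hconst y x hy.1 hy.2 hx.2).symm
  have hconst_lim : Tendsto h (𝓝[>] (0:ℝ)) (𝓝 (h x)) :=
    tendsto_const_nhds.congr' (hev.mono fun y hy => hy.symm)
  exact tendsto_nhds_unique hconst_lim hlim

lemma landen {x : ℝ} (hx1 : 0 < x) (hx2 : x ≤ 1/3) :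
    LiR 2 (x / (x - 1)) + LiR 2 x + (1/2) * Real.log (1 - x) ^ 2 = 0 := by
  set g : ℝ → ℝ := fun y => LiR 2 (y / (y - 1)) + LiR 2 y + (1/2) * Real.log (1 - y) ^ 2 with gdef
  have key : ∀ y : ℝ, 0 ≤ y → y < 1/2 → HasDerivAt g 0 y := by
    intro y hy0 hy12
    have hy1ne : y - 1 ≠ 0 := by intro hc; have := sub_eq_zero.mp hc; linarith
    have h1yne : (1:ℝ) - y ≠ 0 := by intro hc; have := sub_eq_zero.mp hc; linarith
    have hu : HasDerivAt (fun z : ℝ => z / (z - 1)) (-1 / (y - 1) ^ 2) y := by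
      have := (hasDerivAt_id y).div ((hasDerivAt_id y).sub_const 1) hy1ne
      refine this.congr_deriv ?_
      simp only [id]
      field_simp
      ring
    have e : y / (y - 1) = -(y / (1 - y)) := by rw [← neg_div_neg_eq, neg_sub, neg_div]
    have ht0 : 0 ≤ y / (1 - y) := div_nonneg hy0 (by linarith)
    have ht1 : y / (1 - y) < 1 := (div_lt_one (by linarith)).mpr (by linarith)
    have huval : y / (y - 1) ∈ Ioo (-1:ℝ) 1 := by
      rw [e]; constructor
      · linarith
      · linarith
    have hinner : (1:ℝ) - y / (y - 1) = (1 - y)⁻¹ := by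
      field_simp
      ring
    have inner2 : HasDerivAt (fun z : ℝ => 1 - z) (-1) y := by
      simpa using (hasDerivAt_id y).const_sub 1
    have d3 : HasDerivAt (fun z : ℝ => (1/2) * Real.log (1 - z) ^ 2)
        ((1/2) * (2 * Real.log (1 - y) ^ 1 * ((1 - y)⁻¹ * (-1)))) y :=
      (((Real.hasDerivAt_log h1yne).comp y inner2).pow 2).const_mul (1/2)
    rcases eq_or_ne y 0 with rfl | hyne
    · have h0 : (0:ℝ) / (0 - 1) = 0 := by norm_num
      have dL : HasDerivAt (LiR 2) 1 ((0:ℝ) / (0 - 1)) := by rw [h0]; exact LiR_deriv_zero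
      have d1 := dL.comp (0:ℝ) hu
      have total := (d1.add LiR_deriv_zero).add d3
      refine total.congr_deriv ?_
      norm_num
    · have hune : y / (y - 1) ≠ 0 := div_ne_zero hyne hy1ne
      have dL := LiR_deriv_ne huval hune
      have d1 := dL.comp y hu
      have d2 := LiR_deriv_ne (⟨by linarith, by linarith⟩ : y ∈ Ioo (-1:ℝ) 1) hyne
      have total := (d1.add d2).add d3
      refine total.congr_deriv ?_
      rw [hinner, Real.log_inv]
      field_simp
      ring
  have hcont : ContinuousOn g (Icc 0 x) := by
    have c1 : ContinuousOn (fun y : ℝ => LiR 2 (y / (y - 1))) (Icc 0 x) := by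
      refine LiR_contOn.comp (continuousOn_id.div (continuousOn_id.sub continuousOn_const) ?_) ?_
      · intro y hy
        try simp only [id_eq]
        intro hc; have := sub_eq_zero.mp hc; nlinarith [hy.1, hy.2]
      · intro y hy
        obtain ⟨hy0, hyx⟩ := hy
        have hyb : y ≤ 1/3 := le_trans hyx hx2
        have e : y / (y - 1) = -(y / (1 - y)) := by rw [← neg_div_neg_eq, neg_sub, neg_div]
        have ht0 : 0 ≤ y / (1 - y) := div_nonneg hy0 (by linarith)
        have ht1 : y / (1 - y) ≤ 1 := (div_le_one (by linarith)).mpr (by linarith)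
        simp only [id_eq, Set.mem_Icc]
        rw [e]
        constructor
        · linarith
        · linarith
    have c2 : ContinuousOn (LiR 2) (Icc 0 x) :=
      LiR_contOn.mono (fun y hy => ⟨by linarith [hy.1], by nlinarith [hy.2]⟩)
    have c3 : ContinuousOn (fun y : ℝ => (1/2) * Real.log (1 - y) ^ 2) (Icc 0 x) := by
      refine continuousOn_const.mul (ContinuousOn.pow ?_ 2)
      refine Real.continuousOn_log.comp (continuousOn_const.sub continuousOn_id) ?_
      intro y hy
      simp only [Set.mem_compl_iff, Set.mem_singleton_iff, id_eq]
      intro hc; have := sub_eq_zero.mp hc; nlinarith [hy.2]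
    exact (c1.add c2).add c3
  have hcst := constant_of_has_deriv_right_zero hcont (fun y hy => by
    refine (key y hy.1 ?_).hasDerivWithinAt
    have := hy.2
    linarith)
  have hx0 := hcst x ⟨le_of_lt hx1, le_refl x⟩
  have g0 : g 0 = 0 := by
    simp only [gdef]
    rw [show (0:ℝ)/(0-1) = 0 by norm_num, LiR_zero]
    norm_num
  simpa [gdef] using hx0.trans g0

lemma dup {x : ℝ} (hx : |x| ≤ 1) :
    LiR 2 x + LiR 2 (-x) = (1/2) * LiR 2 (x ^ 2) := by
  have hs1 := summable_LiR hx
  have hs2 := summable_LiR (x := -x) (by rwa [abs_neg])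
  have hsq : |x ^ 2| ≤ 1 := by
    rw [abs_pow]
    exact pow_le_one₀ (abs_nonneg x) hx
  have hs3 := summable_LiR hsq
  have hsum : HasSum (fun k : ℕ => x ^ (k+1) / ((k:ℝ)+1)^2 + (-x) ^ (k+1) / ((k:ℝ)+1)^2)
      (LiR 2 x + LiR 2 (-x)) := by
    have := hs1.hasSum.add hs2.hasSum
    simpa [LiR] using this
  have h2 : HasSum (fun m : ℕ => (1/2) * ((x^2) ^ (m+1) / ((m:ℝ)+1)^2)) ((1/2) * LiR 2 (x^2)) := by
    have := hs3.hasSum.mul_left (1/2)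
    simpa [LiR] using this
  have hg : Function.Injective (fun m : ℕ => 2 * m + 1) := by
    intro a b hab
    dsimp only at hab
    omega
  have hz : ∀ k : ℕ, k ∉ Set.range (fun m : ℕ => 2 * m + 1) →
      x ^ (k+1) / ((k:ℝ)+1)^2 + (-x) ^ (k+1) / ((k:ℝ)+1)^2 = 0 := by
    intro k hk
    have hkodd : Odd (k + 1) := by
      rcases Nat.even_or_odd (k+1) with he | ho
      · exfalso
        obtain ⟨m, hm⟩ := he
        refine hk ⟨m - 1, ?_⟩
        dsimp only
        omega
      · exact ho
    rw [hkodd.neg_pow]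
    ring
  have hcomp : (fun k : ℕ => x ^ (k+1) / ((k:ℝ)+1)^2 + (-x) ^ (k+1) / ((k:ℝ)+1)^2)
      ∘ (fun m : ℕ => 2 * m + 1) = fun m : ℕ => (1/2) * ((x^2) ^ (m+1) / ((m:ℝ)+1)^2) := by
    funext m
    simp only [Function.comp_apply]
    have he : Even (2 * m + 1 + 1) := ⟨m + 1, by ring⟩
    rw [he.neg_pow]
    have hp : x ^ (2 * m + 1 + 1) = (x^2) ^ (m+1) := by
      rw [← pow_mul]
      ring_nf
    rw [hp]
    have hc : ((2 * m + 1 : ℕ) : ℝ) + 1 = 2 * ((m:ℝ) + 1) := by push_cast; ring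
    rw [hc]
    have hm0 : ((m:ℝ) + 1) ≠ 0 := by positivity
    field_simp
    ring
  have := (hg.hasSum_iff hz).mp (hcomp.symm ▸ h2)
  exact hsum.unique this

lemma cos_id (n : ℕ) : 2 * Real.cos ((n : ℝ) * (π / 3)) =
    -(-1 : ℝ) ^ n + (if 3 ∣ n then 3 * (-1 : ℝ) ^ (n / 3) else 0) := by
  obtain ⟨q, r, hr6, rfl⟩ : ∃ q r : ℕ, r < 6 ∧ n = 6 * q + r :=
    ⟨n / 6, n % 6, Nat.mod_lt _ (by norm_num), by omega⟩
  have hcos : Real.cos (((6 * q + r : ℕ) : ℝ) * (π / 3)) = Real.cos ((r : ℝ) * (π / 3)) := by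
    have harg : ((6 * q + r : ℕ) : ℝ) * (π / 3) = (r : ℝ) * (π / 3) + (q : ℤ) * (2 * π) := by
      push_cast
      ring
    rw [harg, Real.cos_add_int_mul_two_pi]
  rw [hcos]
  have hpow : (-1 : ℝ) ^ (6 * q + r) = (-1) ^ r := by
    rw [pow_add, pow_mul]
    norm_num
  rw [hpow]
  interval_cases r
  · rw [if_pos ⟨2 * q, by ring⟩]
    have hdiv : (6 * q + 0) / 3 = 2 * q := by omega
    rw [hdiv, pow_mul]
    norm_num
  · rw [if_neg (by omega)]
    norm_num [Real.cos_pi_div_three]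
  · rw [if_neg (by omega)]
    rw [show ((2:ℕ):ℝ) * (π / 3) = π - π/3 by push_cast; ring, Real.cos_pi_sub,
      Real.cos_pi_div_three]
    norm_num
  · rw [if_pos ⟨2 * q + 1, by ring⟩]
    have hdiv : (6 * q + 3) / 3 = 2 * q + 1 := by omega
    rw [hdiv, pow_add, pow_mul]
    rw [show ((3:ℕ):ℝ) * (π / 3) = π by push_cast; ring, Real.cos_pi]
    norm_num
  · rw [if_neg (by omega)]
    rw [show ((4:ℕ):ℝ) * (π / 3) = 2 * π - (π - π/3) by push_cast; ring, Real.cos_two_pi_sub,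
      Real.cos_pi_sub, Real.cos_pi_div_three]
    norm_num
  · rw [if_neg (by omega)]
    rw [show ((5:ℕ):ℝ) * (π / 3) = 2 * π - π/3 by push_cast; ring, Real.cos_two_pi_sub,
      Real.cos_pi_div_three]
    norm_num

lemma z_pow (k : ℕ) :
    (((1/2 : ℝ) : ℂ) * Complex.exp ((Real.pi / 3) * Complex.I)) ^ (k+1) / ((k:ℂ)+1) ^ 2
    = ((((1/2:ℝ)^(k+1) / ((k:ℝ)+1)^2 : ℝ)) : ℂ)
        * Complex.exp (((((k:ℝ)+1) * (π/3) : ℝ)) * Complex.I) := by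
  rw [mul_pow, ← Complex.exp_nat_mul]
  rw [show ((k+1:ℕ):ℂ) * ((Real.pi / 3 : ℂ) * Complex.I)
      = ((((k:ℝ)+1) * (π/3) : ℝ) : ℂ) * Complex.I by push_cast; ring]
  push_cast
  have hne : ((k:ℂ)+1) ≠ 0 := by
    intro hc
    have := congrArg Complex.re hc
    push_cast at this
    norm_num at this
    linarith [Nat.cast_nonneg (α := ℝ) k]
  field_simp

lemma summable_z : Summable (fun k : ℕ =>
    (((1/2 : ℝ) : ℂ) * Complex.exp ((Real.pi / 3) * Complex.I)) ^ (k+1) / ((k:ℂ)+1) ^ 2) := by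
  refine Summable.of_norm_bounded summable_aux fun k => ?_
  rw [z_pow k]
  rw [norm_mul, Complex.norm_real]
  rw [show ∀ x : ℝ, ‖Complex.exp ((x:ℂ) * Complex.I)‖ = 1 from fun x => by
    rw [Complex.norm_exp_ofReal_mul_I]]
  rw [mul_one, Real.norm_eq_abs, abs_div, abs_pow, abs_pow]
  have h1 : |(1:ℝ)/2| = 1/2 := by norm_num
  have h2 : |(k:ℝ)+1| = (k:ℝ)+1 := abs_of_pos (by positivity)
  rw [h1, h2]
  have hk : (0:ℝ) < ((k:ℝ)+1)^2 := by positivity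
  rw [div_le_div_iff₀ hk hk]
  have h3 : ((1:ℝ)/2) ^ (k+1) ≤ 1 := pow_le_one₀ (by norm_num) (by norm_num)
  nlinarith [pow_nonneg (by norm_num : (0:ℝ) ≤ 1/2) (k+1)]

lemma re_Li : (Li 2 (((1/2 : ℝ) : ℂ) * Complex.exp ((Real.pi / 3) * Complex.I))).re
    = ∑' k : ℕ, (1/2 : ℝ) ^ (k + 1) * Real.cos (((k : ℝ) + 1) * (π / 3)) / ((k : ℝ) + 1) ^ 2 := by
  have h2 := Complex.hasSum_re summable_z.hasSum
  rw [Li, ← h2.tsum_eq]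
  refine tsum_congr fun k => ?_
  rw [z_pow k, Complex.re_ofReal_mul, Complex.exp_ofReal_mul_I_re]
  ring

lemma term_id (k : ℕ) :
    2 * ((1/2 : ℝ) ^ (k + 1) * Real.cos (((k : ℝ) + 1) * (π / 3)) / ((k : ℝ) + 1) ^ 2)
    = -((-(1/2) : ℝ) ^ (k+1) / ((k:ℝ)+1)^2)
      + (if 3 ∣ (k+1) then (1/3) * ((-(1/8) : ℝ) ^ ((k+1)/3) / ((((k+1)/3 : ℕ)):ℝ)^2) else 0) := by
  have hc := cos_id (k+1)
  have hcast : ((k+1:ℕ):ℝ) = (k:ℝ)+1 := by push_cast; ring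
  rw [hcast] at hc
  by_cases h3 : 3 ∣ (k+1)
  · rw [if_pos h3] at hc ⊢
    obtain ⟨m, hm⟩ := h3
    have hm1 : 1 ≤ m := by omega
    have hd : (k+1)/3 = m := by omega
    have hkr : ((k:ℝ)+1) = 3*(m:ℝ) := by
      have h5 : ((k+1:ℕ):ℝ) = ((3*m:ℕ):ℝ) := by rw [hm]
      push_cast at h5
      linarith
    rw [hd] at hc ⊢
    rw [hkr] at hc ⊢
    have hcos : Real.cos (3*(m:ℝ)*(π/3)) = (-(-1:ℝ)^(k+1) + 3*(-1:ℝ)^m)/2 := by linarith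
    rw [hcos, hm]
    have hmne : ((m:ℝ)) ≠ 0 := Nat.cast_ne_zero.mpr (by omega)
    rw [pow_mul, pow_mul, pow_mul]
    rw [show (-(1/8) : ℝ) = (-1) * (1/8) by norm_num, mul_pow]
    norm_num
    field_simp
    ring_nf
    rw [← mul_pow]
    norm_num
  · rw [if_neg h3] at hc ⊢
    have hcos : Real.cos (((k:ℝ)+1)*(π/3)) = (-(-1:ℝ)^(k+1) + 0)/2 := by linarith
    rw [hcos]
    rw [show (-(1/2) : ℝ) = (-1) * (1/2) by norm_num, mul_pow]
    have hne : ((k:ℝ)+1) ≠ 0 := by positivity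
    field_simp
    ring

lemma hasSum_b : HasSum (fun k : ℕ =>
      if 3 ∣ (k+1) then (1/3) * ((-(1/8) : ℝ) ^ ((k+1)/3) / ((((k+1)/3 : ℕ)):ℝ)^2) else 0)
    ((1/3) * LiR 2 (-(1/8))) := by
  have habs : |(-(1/8) : ℝ)| ≤ 1 := by rw [abs_le]; norm_num
  have h : HasSum (fun m : ℕ => (1/3) * ((-(1/8) : ℝ) ^ (m+1) / ((m:ℝ)+1)^2))
      ((1/3) * LiR 2 (-(1/8))) := by
    have := (summable_LiR habs).hasSum.mul_left (1/3)
    simpa [LiR] using this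
  have hg : Function.Injective (fun m : ℕ => 3 * m + 2) := by
    intro a b hab
    dsimp only at hab
    omega
  have hz : ∀ k : ℕ, k ∉ Set.range (fun m : ℕ => 3 * m + 2) →
      (if 3 ∣ (k+1) then (1/3) * ((-(1/8) : ℝ) ^ ((k+1)/3) / ((((k+1)/3 : ℕ)):ℝ)^2) else 0) = 0 := by
    intro k hk
    rw [if_neg]
    intro hdvd
    obtain ⟨m, hm⟩ := hdvd
    refine hk ⟨m - 1, ?_⟩
    dsimp only
    omega
  have hcomp : (fun k : ℕ =>
      if 3 ∣ (k+1) then (1/3) * ((-(1/8) : ℝ) ^ ((k+1)/3) / ((((k+1)/3 : ℕ)):ℝ)^2) else 0)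
      ∘ (fun m : ℕ => 3 * m + 2)
      = fun m : ℕ => (1/3) * ((-(1/8) : ℝ) ^ (m+1) / ((m:ℝ)+1)^2) := by
    funext m
    simp only [Function.comp_apply]
    have hdvd : 3 ∣ (3 * m + 2 + 1) := ⟨m + 1, by ring⟩
    rw [if_pos hdvd]
    have hd : (3 * m + 2 + 1) / 3 = m + 1 := by omega
    rw [hd]
    push_cast
    ring
  exact (hg.hasSum_iff hz).mp (hcomp.symm ▸ h)

lemma two_re : 2 * (Li 2 (((1/2 : ℝ) : ℂ) * Complex.exp ((Real.pi / 3) * Complex.I))).re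
    = (1/3) * LiR 2 (-(1/8)) - LiR 2 (-(1/2)) := by
  rw [re_Li, ← tsum_mul_left, tsum_congr term_id]
  have habs : |(-(1/2) : ℝ)| ≤ 1 := by rw [abs_le]; norm_num
  have hsa : Summable (fun k : ℕ => -((-(1/2) : ℝ) ^ (k+1) / ((k:ℝ)+1)^2)) :=
    (summable_LiR habs).neg
  have hb := hasSum_b
  rw [Summable.tsum_add hsa hb.summable, hb.tsum_eq, tsum_neg]
  rw [show (∑' k : ℕ, (-(1/2) : ℝ) ^ (k+1) / ((k:ℝ)+1)^2) = LiR 2 (-(1/2)) from rfl]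
  ring

theorem stmt3 : Real.pi ^ 2 = 72 * (Li 2 (((1/2 : ℝ) : ℂ) * Complex.exp ((Real.pi / 3) * Complex.I))).re - 18 * LiR 2 (1/4) := by
  have E1 := refl_id (x := 1/2) ⟨by norm_num, by norm_num⟩
  rw [show (1:ℝ) - 1/2 = 1/2 by norm_num] at E1
  rw [show Real.log (1/2) = -Real.log 2 by
    rw [show (1:ℝ)/2 = 2⁻¹ by norm_num, Real.log_inv]] at E1
  have E2 := dup (x := 1/2) (by rw [abs_le]; constructor <;> norm_num)
  rw [show ((1:ℝ)/2)^2 = 1/4 by norm_num] at E2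
  have E3 := dup (x := 1/3) (by rw [abs_le]; constructor <;> norm_num)
  rw [show ((1:ℝ)/3)^2 = 1/9 by norm_num] at E3
  have E4 := landen (x := 1/3) (by norm_num) (by norm_num)
  rw [show (1/3:ℝ)/((1/3:ℝ)-1) = -(1/2) by norm_num,
      show (1:ℝ) - 1/3 = 2/3 by norm_num,
      show Real.log ((2:ℝ)/3) = Real.log 2 - Real.log 3 from
        Real.log_div (by norm_num) (by norm_num)] at E4
  have E5 := landen (x := 1/4) (by norm_num) (by norm_num)
  have hlog34 : Real.log ((3:ℝ)/4) = Real.log 3 - 2*Real.log 2 := by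
    rw [Real.log_div (by norm_num) (by norm_num), show (4:ℝ) = 2^2 by norm_num, Real.log_pow]
    push_cast; ring
  rw [show (1/4:ℝ)/((1/4:ℝ)-1) = -(1/3) by norm_num,
      show (1:ℝ) - 1/4 = 3/4 by norm_num, hlog34] at E5
  have E6 := landen (x := 1/9) (by norm_num) (by norm_num)
  have hlog89 : Real.log ((8:ℝ)/9) = 3*Real.log 2 - 2*Real.log 3 := by
    rw [Real.log_div (by norm_num) (by norm_num), show (8:ℝ) = 2^3 by norm_num,
      show (9:ℝ) = 3^2 by norm_num, Real.log_pow, Real.log_pow]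
    push_cast; ring
  rw [show (1/9:ℝ)/((1/9:ℝ)-1) = -(1/8) by norm_num,
      show (1:ℝ) - 1/9 = 8/9 by norm_num, hlog89] at E6
  have E7 := two_re
  linear_combination (-6)*E1 + 12*E2 + (-24)*E3 + 24*E4 + 24*E5 + (-12)*E6 + (-36)*E7
end

section
/- π²/32 − (log 2)²/8 = 2·Re Li₂((1/2)e^{iπ/2}) + 2·Re Li₂((1/(2√2))e^{iπ/4}) − Re Li₂((1/(4√2))e^{iπ/4}). -/
open Complex


lemma li2_summable {z : ℂ} (hz : ‖z‖ < 1) :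
    Summable (fun k : ℕ => z ^ (k+1) / ((k:ℂ)+1) ^ 2) := by
  apply Summable.of_norm_bounded (summable_geometric_of_lt_one (norm_nonneg z) hz)
  intro k
  have h1 : ((k:ℂ)+1) = ((k+1 : ℕ) : ℂ) := by push_cast; ring
  rw [norm_div, norm_pow, norm_pow, h1, Complex.norm_natCast]
  have h2 : (1:ℝ) ≤ ((k+1:ℕ):ℝ)^2 := by
    have : (1:ℝ) ≤ ((k+1:ℕ):ℝ) := by exact_mod_cast Nat.one_le_iff_ne_zero.2 (Nat.succ_ne_zero k)
    nlinarith
  calc ‖z‖^(k+1) / ((k+1:ℕ):ℝ)^2 ≤ ‖z‖^(k+1) / 1 := by gcongr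
    _ ≤ ‖z‖^k := by simpa using pow_le_pow_of_le_one (norm_nonneg z) hz.le (Nat.le_succ k)

lemma li2_hasSum {z : ℂ} (hz : ‖z‖ < 1) :
    HasSum (fun k : ℕ => z ^ (k+1) / ((k:ℂ)+1) ^ 2) (Li 2 z) := (li2_summable hz).hasSum

lemma li2_zero : Li 2 0 = 0 := by simp [Li]

lemma li2_sq {z : ℂ} (hz : ‖z‖ < 1) : Li 2 (z^2) = 2 * Li 2 z + 2 * Li 2 (-z) := by
  have hzn : ‖-z‖ < 1 := by simpa using hz
  have hz2 : ‖z^2‖ < 1 := by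
    rw [norm_pow]
    nlinarith [norm_nonneg z]
  have h3 := (li2_hasSum hz).add (li2_hasSum hzn)
  set F : ℕ → ℂ := fun k => z^(k+1)/((k:ℂ)+1)^2 + (-z)^(k+1)/((k:ℂ)+1)^2 with hF
  have hinj : Function.Injective (fun m : ℕ => 2*m+1) := fun a b h => by dsimp at h; omega
  have hzero : ∀ k, k ∉ Set.range (fun m : ℕ => 2*m+1) → F k = 0 := by
    intro k hk
    have hke : Even k := by
      rcases Nat.even_or_odd k with h | h
      · exact h
      · obtain ⟨c, hc⟩ := h
        exact absurd (Set.mem_range.2 ⟨c, by omega⟩) hk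
    have hodd : Odd (k+1) := Even.add_one hke
    simp only [hF, hodd.neg_pow]
    ring
  have h4 : HasSum (fun m => F (2*m+1)) (Li 2 z + Li 2 (-z)) :=
    (Function.Injective.hasSum_iff hinj hzero).2 h3
  have h5 : ∀ m : ℕ, F (2*m+1) = (1/2 : ℂ) * ((z^2)^(m+1)/((m:ℂ)+1)^2) := by
    intro m
    have he : Even (2*m+2) := ⟨m+1, by ring⟩
    simp only [hF]
    rw [show 2*m+1+1 = 2*m+2 from rfl, he.neg_pow]
    have h6 : ((2*m+1 : ℕ) : ℂ) + 1 = 2*((m:ℂ)+1) := by push_cast; ring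
    rw [h6, show z^(2*m+2) = (z^2)^(m+1) by ring]
    have hm : ((m:ℂ)+1) ≠ 0 := by
      intro h
      have := congrArg Complex.re h
      simp at this
      nlinarith [this, Nat.cast_nonneg (α := ℝ) m]
    field_simp
    ring
  have h7 : HasSum (fun m : ℕ => (1/2 : ℂ) * ((z^2)^(m+1)/((m:ℂ)+1)^2)) (Li 2 z + Li 2 (-z)) := by
    simpa only [h5] using h4
  have h8 := h7.mul_left 2
  have h9 : HasSum (fun m : ℕ => (z^2)^(m+1)/((m:ℂ)+1)^2) (2*(Li 2 z + Li 2 (-z))) := by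
    convert h8 using 2 with m
    · rfl
    ring
  rw [(li2_hasSum hz2).unique h9]
  ring

lemma li2_conj (z : ℂ) : Li 2 ((starRingEnd ℂ) z) = (starRingEnd ℂ) (Li 2 z) := by
  rw [Li, Li]
  conv_rhs => rw [starRingEnd_apply, tsum_star]
  congr 1
  funext k
  rw [star_div₀, star_pow, star_pow]
  norm_cast

lemma li2_re_conj (z : ℂ) : (Li 2 ((starRingEnd ℂ) z)).re = (Li 2 z).re := by
  rw [li2_conj, Complex.conj_re]

noncomputable def dli (z : ℂ) : ℂ := ∑' k : ℕ, z ^ k / ((k : ℂ) + 1)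

lemma dli_summable {z : ℂ} (hz : ‖z‖ < 1) :
    Summable (fun k : ℕ => z ^ k / ((k:ℂ)+1)) := by
  apply Summable.of_norm_bounded (summable_geometric_of_lt_one (norm_nonneg z) hz)
  intro k
  have h1 : ((k:ℂ)+1) = ((k+1 : ℕ) : ℂ) := by push_cast; ring
  rw [norm_div, norm_pow, h1, Complex.norm_natCast]
  have h2 : (1:ℝ) ≤ ((k+1:ℕ):ℝ) := by exact_mod_cast Nat.one_le_iff_ne_zero.2 (Nat.succ_ne_zero k)
  calc ‖z‖^k / ((k+1:ℕ):ℝ) ≤ ‖z‖^k / 1 := by gcongr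
    _ = ‖z‖^k := by ring

lemma dli_zero : dli 0 = 1 := by
  rw [dli, tsum_eq_single 0]
  · simp
  · intro k hk
    simp [zero_pow hk]

lemma dli_eq {z : ℂ} (h0 : z ≠ 0) (hz : ‖z‖ < 1) : dli z = -Complex.log (1-z) / z := by
  have H := Complex.hasSum_taylorSeries_neg_log hz
  have hinj : Function.Injective (fun k : ℕ => k+1) := fun a b h => by dsimp at h; omega
  have hzero : ∀ n, n ∉ Set.range (fun k : ℕ => k+1) → z^n/(n:ℂ) = 0 := by
    intro n hn
    have : n = 0 := by
      by_contra h
      exact hn (Set.mem_range.2 ⟨n-1, by omega⟩)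
    simp [this]
  have H2 : HasSum (fun k : ℕ => z^(k+1)/((k+1:ℕ):ℂ)) (-Complex.log (1-z)) :=
    (Function.Injective.hasSum_iff hinj hzero).2 H
  have H3 : HasSum (fun k : ℕ => z * (z^k/((k:ℂ)+1))) (z * dli z) :=
    (dli_summable hz).hasSum.mul_left z
  have H4 : HasSum (fun k : ℕ => z^(k+1)/((k+1:ℕ):ℂ)) (z * dli z) := by
    convert H3 using 2 with k
    push_cast
    ring
  have := H2.unique H4
  field_simp [this]
  rw [this]; ring

lemma hasDerivAt_li2 {z : ℂ} (hz : ‖z‖ < 9/10) : HasDerivAt (Li 2) (dli z) z := by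
  have hu : Summable (fun n : ℕ => (9/10 : ℝ)^n) :=
    summable_geometric_of_lt_one (by norm_num) (by norm_num)
  have hmem : z ∈ Metric.ball (0:ℂ) (9/10) := by simpa [Metric.mem_ball, dist_eq_norm] using hz
  have key := hasDerivAt_tsum_of_isPreconnected hu Metric.isOpen_ball
    (convex_ball (0:ℂ) (9/10)).isPreconnected
    (g := fun (n : ℕ) (y : ℂ) => y^(n+1)/((n:ℂ)+1)^2)
    (g' := fun (n : ℕ) (y : ℂ) => y^n/((n:ℂ)+1))
    (fun n y _ => by
      have hn : ((n:ℂ)+1) ≠ 0 := Nat.cast_add_one_ne_zero n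
      have h := (hasDerivAt_pow (n+1) y).div_const (((n:ℂ)+1)^2)
      refine h.congr_deriv ?_
      push_cast
      field_simp)
    (fun n y hy => by
      have hy' : ‖y‖ < 9/10 := by simpa [Metric.mem_ball, dist_eq_norm] using hy
      have h1 : ((n:ℂ)+1) = ((n+1 : ℕ) : ℂ) := by push_cast; ring
      rw [norm_div, norm_pow, h1, Complex.norm_natCast]
      have h2 : (1:ℝ) ≤ ((n+1:ℕ):ℝ) := by
        exact_mod_cast Nat.one_le_iff_ne_zero.2 (Nat.succ_ne_zero n)
      calc ‖y‖^n / ((n+1:ℕ):ℝ) ≤ ‖y‖^n / 1 := by gcongr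
        _ = ‖y‖^n := by ring
        _ ≤ (9/10)^n := by
          apply pow_le_pow_left₀ (norm_nonneg y) hy'.le)
    (Metric.mem_ball_self (by norm_num))
    (by simpa using summable_zero)
    hmem
  exact key

def U : Set ℂ := Metric.ball (0:ℂ) (3/5) ∩ {z | z.re < 9/20}

lemma U_convex : Convex ℝ U :=
  (convex_ball _ _).inter (convex_halfSpace_re_lt (r := 9/20))

lemma mem_U {z : ℂ} (h1 : ‖z‖ < 3/5) (h2 : z.re < 9/20) : z ∈ U :=
  ⟨by simpa [Metric.mem_ball, dist_eq_norm] using h1, h2⟩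

lemma U_facts {z : ℂ} (hz : z ∈ U) : ‖z‖ < 3/5 ∧ z.re < 9/20 :=
  ⟨by simpa [Metric.mem_ball, dist_eq_norm] using hz.1, hz.2⟩

lemma U_sub_ne_one {z : ℂ} (hz : z ∈ U) : z - 1 ≠ 0 := by
  intro h
  have := congrArg Complex.re h
  simp at this
  have := (U_facts hz).2
  linarith

lemma U_w_norm {z : ℂ} (hz : z ∈ U) : ‖z/(z-1)‖ < 9/10 := by
  obtain ⟨h1, h2⟩ := U_facts hz
  have hne := U_sub_ne_one hz
  rw [norm_div, div_lt_iff₀ (norm_pos_iff.2 hne)]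
  have e1 : ‖z‖^2 = z.re^2 + z.im^2 := by
    rw [Complex.sq_norm, Complex.normSq_apply]; ring
  have e2 : ‖z-1‖^2 = (z.re-1)^2 + z.im^2 := by
    rw [Complex.sq_norm, Complex.normSq_apply]; simp; ring
  have h1' : z.re^2 + z.im^2 < 9/25 := by rw [← e1]; nlinarith [norm_nonneg z]
  apply lt_of_pow_lt_pow_left₀ 2 (by positivity)
  rw [mul_pow, e1, e2]
  nlinarith

lemma U_slit {z : ℂ} (hz : z ∈ U) : (1 - z) ∈ Complex.slitPlane := by
  rw [Complex.mem_slitPlane_iff]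
  left
  have := (U_facts hz).2
  simp only [Complex.sub_re, Complex.one_re]
  linarith

lemma landen_deriv {z : ℂ} (hz : z ∈ U) :
    HasDerivAt (fun y => Li 2 y + Li 2 (y/(y-1)) + Complex.log (1-y)^2/2) 0 z := by
  obtain ⟨hn, hre⟩ := U_facts hz
  have hne := U_sub_ne_one hz
  have hslit := U_slit hz
  have hw := U_w_norm hz
  have h1 : HasDerivAt (Li 2) (dli z) z := hasDerivAt_li2 (by linarith)
  have hinner : HasDerivAt (fun y : ℂ => y/(y-1)) (-1/(z-1)^2) z := by
    have := (hasDerivAt_id z).div ((hasDerivAt_id z).sub_const 1) hne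
    exact this.congr_deriv (by simp only [id]; ring)
  have h2 : HasDerivAt (fun y : ℂ => Li 2 (y/(y-1))) (dli (z/(z-1)) * (-1/(z-1)^2)) z :=
    by have := (hasDerivAt_li2 hw).comp z hinner; exact this
  have hlog : HasDerivAt (fun y : ℂ => Complex.log (1-y)) (-(1-z)⁻¹) z := by
    have hi : HasDerivAt (fun y : ℂ => 1 - y) (-1) z := by
      exact (hasDerivAt_id z).const_sub 1
    have := (Complex.hasDerivAt_log hslit).comp z hi
    exact this.congr_deriv (by ring)
  have h3 : HasDerivAt (fun y : ℂ => Complex.log (1-y)^2/2)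
      (-(Complex.log (1-z)/(1-z))) z := by
    have := (hlog.pow 2).div_const 2
    exact this.congr_deriv (by ring)
  have total := (h1.add h2).add h3
  convert total using 1
  · rfl
  · rfl
  · rfl
  have h1z : (1:ℂ) - z ≠ 0 := by
    intro h; apply hne; rw [← neg_eq_zero]; rw [← h]; ring
  by_cases h0 : z = 0
  · subst h0
    simp [dli_zero, Complex.log_one]
  · have hw0 : z/(z-1) ≠ 0 := div_ne_zero h0 hne
    have hwn : ‖z/(z-1)‖ < 1 := by linarith
    have e1 : dli z = -Complex.log (1-z) / z := dli_eq h0 (by linarith)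
    have e2 : dli (z/(z-1)) = -Complex.log (1-z/(z-1)) / (z/(z-1)) := dli_eq hw0 hwn
    have e3 : 1 - z/(z-1) = (1-z)⁻¹ := by
      field_simp
      ring
    have e4 : Complex.log ((1-z)⁻¹) = -Complex.log (1-z) := by
      apply Complex.log_inv
      exact Complex.slitPlane_arg_ne_pi hslit
    rw [e1, e2, e3, e4]
    field_simp
    ring

lemma landen_s6 {z : ℂ} (hz : z ∈ U) :
    Li 2 z + Li 2 (z/(z-1)) = -Complex.log (1-z)^2/2 := by
  set g : ℂ → ℂ := fun y => Li 2 y + Li 2 (y/(y-1)) + Complex.log (1-y)^2/2 with hg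
  have h0 : (0:ℂ) ∈ U := mem_U (by norm_num) (by norm_num)
  have hderiv : ∀ x ∈ U, HasFDerivWithinAt g (0 : ℂ →L[ℝ] ℂ) U x := by
    intro x hx
    have h := (landen_deriv hx).hasFDerivAt
    have : (ContinuousLinearMap.toSpanSingleton ℂ (0:ℂ)) = 0 := by
      ext; simp
    rw [this] at h
    have := h.restrictScalars ℝ
    simpa using this.hasFDerivWithinAt
  have key := U_convex.norm_image_sub_le_of_norm_hasFDerivWithin_le (C := 0) hderiv
    (fun x _ => by simp) h0 hz
  have hgz : g z = g 0 := by
    have : ‖g z - g 0‖ ≤ 0 := by simpa using key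
    have := le_antisymm this (norm_nonneg _)
    rwa [norm_eq_zero, sub_eq_zero] at this
  have hg0 : g 0 = 0 := by
    simp [hg, li2_zero, Complex.log_one]
  have hfin : Li 2 z + Li 2 (z/(z-1)) + Complex.log (1-z)^2/2 = 0 := by
    have h := hgz.trans hg0
    simpa [hg] using h
  linear_combination hfin

lemma arg_eq_arctan {z : ℂ} (hz : 0 < z.re) : z.arg = Real.arctan (z.im / z.re) := by
  rw [← Complex.tan_arg, Real.arctan_tan]
  · have h := Complex.abs_arg_lt_pi_div_two_iff.2 (Or.inl hz)
    exact (abs_lt.1 h).1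
  · have h := Complex.abs_arg_lt_pi_div_two_iff.2 (Or.inl hz)
    exact (abs_lt.1 h).2

lemma relog_sq (z : ℂ) : (Complex.log z ^ 2).re
    = Real.log ‖z‖ ^ 2 - Complex.arg z ^ 2 := by
  rw [sq, Complex.mul_re, Complex.log_re, Complex.log_im]
  ring

lemma norm_lt_of_sq {z : ℂ} {c : ℝ} (hc : 0 < c) (h : Complex.normSq z < c^2) : ‖z‖ < c := by
  have h1 : ‖z‖^2 = Complex.normSq z := by rw [Complex.sq_norm]
  nlinarith [norm_nonneg z]

lemma re_neg_half (x : ℂ) : (-x/2).re = -(x.re/2) := by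
  simp [Complex.div_re, Complex.normSq_apply]
  ring

-- log abs computations
lemma logabs1 : Real.log ‖((2-I)/2 : ℂ)‖ = (Real.log 5 - 2*Real.log 2)/2 := by
  rw [Complex.norm_def]
  have h : Complex.normSq ((2-I)/2) = 5/4 := by
    simp [Complex.normSq_apply, Complex.div_re, Complex.div_im]; try norm_num
  rw [h, Real.log_sqrt (by norm_num),
    show (5/4 : ℝ) = 5 / 2^2 by norm_num, Real.log_div (by norm_num) (by norm_num), Real.log_pow]
  push_cast; ring

lemma logabs2 : Real.log ‖((3-I)/4 : ℂ)‖ = (Real.log 5 - 3*Real.log 2)/2 := by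
  rw [Complex.norm_def]
  have h : Complex.normSq ((3-I)/4) = 5/8 := by
    simp [Complex.normSq_apply, Complex.div_re, Complex.div_im]; try norm_num
  rw [h, Real.log_sqrt (by norm_num),
    show (5/8 : ℝ) = 5 / 2^3 by norm_num, Real.log_div (by norm_num) (by norm_num), Real.log_pow]
  push_cast; ring

lemma logabs3 : Real.log ‖((7-I)/8 : ℂ)‖ = (2*Real.log 5 - 5*Real.log 2)/2 := by
  rw [Complex.norm_def]
  have h : Complex.normSq ((7-I)/8) = 25/32 := by
    simp [Complex.normSq_apply, Complex.div_re, Complex.div_im]; try norm_num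
  rw [h, Real.log_sqrt (by norm_num),
    show (25/32 : ℝ) = 5^2 / 2^5 by norm_num, Real.log_div (by norm_num) (by norm_num),
    Real.log_pow, Real.log_pow]
  push_cast; ring

-- arg computations
lemma arg1 : ((2-I)/2 : ℂ).arg = -Real.arctan (1/2) := by
  have hre : (0:ℝ) < ((2-I)/2 : ℂ).re := by
    simp [Complex.div_re, Complex.normSq_apply]
  rw [arg_eq_arctan hre,
    show ((2-I)/2 : ℂ).im / ((2-I)/2 : ℂ).re = -(1/2) by
      simp [Complex.div_re, Complex.div_im, Complex.normSq_apply]; try norm_num]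
  exact Real.arctan_neg _

lemma arg2 : ((3-I)/4 : ℂ).arg = -Real.arctan (1/3) := by
  have hre : (0:ℝ) < ((3-I)/4 : ℂ).re := by
    simp [Complex.div_re, Complex.normSq_apply]; try norm_num
  rw [arg_eq_arctan hre,
    show ((3-I)/4 : ℂ).im / ((3-I)/4 : ℂ).re = -(1/3) by
      simp [Complex.div_re, Complex.div_im, Complex.normSq_apply]; try norm_num]
  exact Real.arctan_neg _

lemma arg3 : ((7-I)/8 : ℂ).arg = -Real.arctan (1/7) := by
  have hre : (0:ℝ) < ((7-I)/8 : ℂ).re := by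
    simp [Complex.div_re, Complex.normSq_apply]; try norm_num
  rw [arg_eq_arctan hre,
    show ((7-I)/8 : ℂ).im / ((7-I)/8 : ℂ).re = -(1/7) by
      simp [Complex.div_re, Complex.div_im, Complex.normSq_apply]; try norm_num]
  exact Real.arctan_neg _

theorem stmt6 : Real.pi ^ 2 / 32 - (Real.log 2) ^ 2 / 8 = 2 * (Li 2 (((1/2 : ℝ) : ℂ) * Complex.exp ((Real.pi / 2) * Complex.I))).re + 2 * (Li 2 (((1 / (2 * Real.sqrt 2) : ℝ) : ℂ) * Complex.exp ((Real.pi / 4) * Complex.I))).re - (Li 2 (((1 / (4 * Real.sqrt 2) : ℝ) : ℂ) * Complex.exp ((Real.pi / 4) * Complex.I))).re := by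
  have hs2 : Real.sqrt 2 * Real.sqrt 2 = 2 := Real.mul_self_sqrt (by norm_num)
  have hs2' : Real.sqrt 2 ≠ 0 := by positivity
  -- rewrite the input points
  have hexp2 : Complex.exp ((Real.pi / 2 : ℝ) * Complex.I) = I := by
    rw [Complex.exp_mul_I]
    rw [show ((Real.pi/2 : ℝ) : ℂ) = ((Real.pi/2 : ℝ) : ℂ) from rfl, ← Complex.ofReal_cos,
      ← Complex.ofReal_sin, Real.cos_pi_div_two, Real.sin_pi_div_two]
    simp
  have hexp4 : Complex.exp ((Real.pi / 4 : ℝ) * Complex.I)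
      = ((Real.sqrt 2 / 2 : ℝ) : ℂ) * (1 + I) := by
    rw [Complex.exp_mul_I, ← Complex.ofReal_cos, ← Complex.ofReal_sin,
      Real.cos_pi_div_four, Real.sin_pi_div_four]
    ring
  have hc2 : ((Real.pi : ℂ))/2 = ((Real.pi/2 : ℝ) : ℂ) := by push_cast; ring
  have hc4 : ((Real.pi : ℂ))/4 = ((Real.pi/4 : ℝ) : ℂ) := by push_cast; ring
  have E1 : ((1/2 : ℝ) : ℂ) * Complex.exp ((Real.pi : ℂ) / 2 * Complex.I) = I/2 := by
    rw [hc2, hexp2]; push_cast; ring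
  have E2 : ((1 / (2 * Real.sqrt 2) : ℝ) : ℂ) * Complex.exp ((Real.pi : ℂ) / 4 * Complex.I)
      = (1+I)/4 := by
    rw [hc4, hexp4, ← mul_assoc, ← Complex.ofReal_mul,
      show (1 / (2 * Real.sqrt 2)) * (Real.sqrt 2 / 2) = (1/4 : ℝ) by
        field_simp; ring]
    push_cast; ring
  have E3 : ((1 / (4 * Real.sqrt 2) : ℝ) : ℂ) * Complex.exp ((Real.pi : ℂ) / 4 * Complex.I)
      = (1+I)/8 := by
    rw [hc4, hexp4, ← mul_assoc, ← Complex.ofReal_mul,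
      show (1 / (4 * Real.sqrt 2)) * (Real.sqrt 2 / 2) = (1/8 : ℝ) by
        field_simp; linarith [hs2]]
    push_cast; ring
  rw [E1, E2, E3]
  -- U memberships
  have hU1 : (I/2 : ℂ) ∈ U := by
    apply mem_U
    · apply norm_lt_of_sq (by norm_num)
      simp [Complex.normSq_apply, Complex.div_re, Complex.div_im]
      norm_num
    · simp [Complex.div_re, Complex.normSq_apply]
  have hU2 : ((1+I)/4 : ℂ) ∈ U := by
    apply mem_U
    · apply norm_lt_of_sq (by norm_num)
      simp [Complex.normSq_apply, Complex.div_re, Complex.div_im]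
      norm_num
    · simp [Complex.div_re, Complex.normSq_apply]; try norm_num
  have hU3 : ((1+I)/8 : ℂ) ∈ U := by
    apply mem_U
    · apply norm_lt_of_sq (by norm_num)
      simp [Complex.normSq_apply, Complex.div_re, Complex.div_im]
      norm_num
    · simp [Complex.div_re, Complex.normSq_apply]; try norm_num
  -- landen instances
  have ne1 : (I/2 : ℂ) - 1 ≠ 0 := by
    intro h; have := congrArg Complex.re h
    simp [Complex.div_re, Complex.normSq_apply] at this
  have ne2 : ((1+I)/4 : ℂ) - 1 ≠ 0 := by
    intro h; have := congrArg Complex.re h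
    simp [Complex.div_re, Complex.normSq_apply] at this
    try norm_num at this
  have ne3 : ((1+I)/8 : ℂ) - 1 ≠ 0 := by
    intro h; have := congrArg Complex.re h
    simp [Complex.div_re, Complex.normSq_apply] at this
    try norm_num at this
  have W1 : (I/2)/((I/2)-1) = (1-2*I)/5 := by
    rw [div_eq_iff ne1]; ring_nf; simp [Complex.I_sq]; try ring
  have W2 : ((1+I)/4)/(((1+I)/4)-1) = (-1-2*I)/5 := by
    rw [div_eq_iff ne2]; ring_nf; simp [Complex.I_sq]; try ring
  have W3 : ((1+I)/8)/(((1+I)/8)-1) = (-3-4*I)/25 := by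
    rw [div_eq_iff ne3]; ring_nf; simp [Complex.I_sq]; try ring
  have S1 : (1 : ℂ) - I/2 = (2-I)/2 := by ring
  have S2 : (1 : ℂ) - (1+I)/4 = (3-I)/4 := by ring
  have S3 : (1 : ℂ) - (1+I)/8 = (7-I)/8 := by ring
  have L1 := landen_s6 hU1; rw [W1, S1] at L1
  have L2 := landen_s6 hU2; rw [W2, S2] at L2
  have L3 := landen_s6 hU3; rw [W3, S3] at L3
  -- square identity at v = (1-2I)/5
  have hv : ‖((1:ℂ)-2*I)/5‖ < 1 := by
    apply norm_lt_of_sq (by norm_num)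
    simp [Complex.normSq_apply, Complex.div_re, Complex.div_im]
    try norm_num
  have hsq := li2_sq hv
  rw [show (((1:ℂ)-2*I)/5)^2 = (-3-4*I)/25 by
    ring_nf; simp [Complex.I_sq]; try ring] at hsq
  -- conjugation: Li2((-1-2I)/5).re = Li2(-((1-2I)/5)).re
  have hconj : (Li 2 ((-1-2*I)/5)).re = (Li 2 (-(((1:ℂ)-2*I)/5))).re := by
    rw [show ((-1-2*I)/5 : ℂ) = (starRingEnd ℂ) (-(((1:ℂ)-2*I)/5)) by
      apply Complex.ext <;>
        simp [Complex.div_re, Complex.div_im, Complex.normSq_apply] <;> try norm_num]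
    exact li2_re_conj _
  -- take real parts
  have R1 : (Li 2 (I/2)).re = -(Li 2 (((1:ℂ)-2*I)/5)).re - (Complex.log ((2-I)/2)^2).re/2 := by
    have := congrArg Complex.re L1
    rw [Complex.add_re, re_neg_half] at this
    linarith
  have R2 : (Li 2 ((1+I)/4)).re
      = -(Li 2 (-(((1:ℂ)-2*I)/5))).re - (Complex.log ((3-I)/4)^2).re/2 := by
    have := congrArg Complex.re L2
    rw [Complex.add_re, re_neg_half, hconj] at this
    linarith
  have Rsq : (Li 2 ((-3-4*I)/25)).re
      = 2*(Li 2 (((1:ℂ)-2*I)/5)).re + 2*(Li 2 (-(((1:ℂ)-2*I)/5))).re := by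
    have := congrArg Complex.re hsq
    simpa [Complex.add_re, Complex.mul_re] using this
  have R3 : (Li 2 ((1+I)/8)).re
      = -(2*(Li 2 (((1:ℂ)-2*I)/5)).re + 2*(Li 2 (-(((1:ℂ)-2*I)/5))).re)
        - (Complex.log ((7-I)/8)^2).re/2 := by
    have := congrArg Complex.re L3
    rw [Complex.add_re, re_neg_half, Rsq] at this
    linarith
  rw [R1, R2, R3, relog_sq, relog_sq, relog_sq, logabs1, logabs2, logabs3, arg1, arg2, arg3]
  -- arctan relations
  have hab : Real.arctan (1/2) + Real.arctan (1/3) = Real.pi/4 := by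
    rw [Real.arctan_add (by norm_num)]
    try norm_num [Real.arctan_one]
  have hbc : Real.arctan (1/3) + Real.arctan (1/7) = Real.arctan (1/2) := by
    rw [Real.arctan_add (by norm_num)]
    try norm_num
  rw [show Real.arctan (1/2) = Real.pi/4 - Real.arctan (1/3) by linarith,
    show Real.arctan (1/7) = Real.pi/4 - 2*Real.arctan (1/3) by linarith]
  ring
end
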